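/- (The relaxed worst-case regret dominates the worst-case regret.) Let n ≥ 1, let x be a schedule, and define LB(r) = max{ LB₁(r), LB₂(r), LB₃(r) } as the combined lower bound on the optimal makespan. Then the relaxed worst-case regret Z̃(x) = max over jobs j of ( C_max(x, r̄^j) − LB(r̄^j) ) satisfies Z̃(x) ≥ Z(x). -/
import Mathlib


open Finset

/-- A schedule assigns to each machine a finite sequence of jobs such that
every job occurs exactly once among all the sequences. -/
structure Schedule (m n : ℕ) where
  seq : Fin m → List (Fin n)
  valid : ∀ j : Fin n, (∑ i : Fin m, (seq i).count j) = 1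

variable {m n : ℕ}

/-- Completion time after processing the list `L` of jobs on a machine with
processing times `q` and release dates `r`; recursively `C₀ = 0`,
`C_k = q j_k + max C_{k-1} (r j_k)`. -/
def mComp (q r : Fin n → ℝ) (L : List (Fin n)) : ℝ :=
  L.foldl (fun c j => q j + max c (r j)) 0

/-- Makespan of the schedule `x` under the release dates `r`. -/
noncomputable def Cmax (p : Fin m → Fin n → ℝ) (x : Schedule m n) (r : Fin n → ℝ) : ℝ :=
  ⨆ i : Fin m, mComp (p i) r (x.seq i)

/-- Optimal makespan `C*(r)`: the minimum of `Cmax` over all schedules. -/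
noncomputable def Cstar (p : Fin m → Fin n → ℝ) (r : Fin n → ℝ) : ℝ :=
  ⨅ x : Schedule m n, Cmax p x r

/-- Regret of schedule `x` under scenario `r`. -/
noncomputable def regret (p : Fin m → Fin n → ℝ) (x : Schedule m n) (r : Fin n → ℝ) : ℝ :=
  Cmax p x r - Cstar p r

/-- The scenario box determined by the interval bounds. -/
def box (rlo rhi : Fin n → ℝ) : Set (Fin n → ℝ) :=
  {r | ∀ j, rlo j ≤ r j ∧ r j ≤ rhi j}

/-- Worst-case regret `Z(x)`. -/
noncomputable def Zreg (p : Fin m → Fin n → ℝ) (x : Schedule m n) (rlo rhi : Fin n → ℝ) : ℝ :=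
  sSup ((fun r => regret p x r) '' box rlo rhi)

/-- Extreme scenario `r̄^j`. -/
def extSc (rlo rhi : Fin n → ℝ) (j : Fin n) : Fin n → ℝ :=
  Function.update rlo j (rhi j)

/-- The set `H(x)` of jobs whose release interval is covered by the
processing of their predecessors (positions are 0-indexed: job at position
`k ≥ 1` has predecessors `(x.seq i).take k`). -/
def Hset (p : Fin m → Fin n → ℝ) (rlo rhi : Fin n → ℝ) (x : Schedule m n) : Set (Fin n) :=
  {j | ∃ i : Fin m, ∃ k : ℕ, 1 ≤ k ∧ (x.seq i)[k]? = some j ∧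
    rhi j ≤ mComp (p i) rlo ((x.seq i).take k)}

/-- Lower bound `LB₁(r) = max_j (r j + min_i p i j)`. -/
noncomputable def LB1 (p : Fin m → Fin n → ℝ) (r : Fin n → ℝ) : ℝ :=
  ⨆ j : Fin n, (r j + ⨅ i : Fin m, p i j)

/-- Lower bound `LB(r) = min_j r j + m⁻¹ ∑_j min_i p i j`. -/
noncomputable def LB0 (p : Fin m → Fin n → ℝ) (r : Fin n → ℝ) : ℝ :=
  (⨅ j : Fin n, r j) + (m : ℝ)⁻¹ * ∑ j : Fin n, ⨅ i : Fin m, p i j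

/-- `E_j(r)`: the jobs unavailable before `j`. -/
noncomputable def Ej (r : Fin n → ℝ) (j : Fin n) : Finset (Fin n) :=
  Finset.univ.filter fun t => r j ≤ r t

lemma Ej_nonempty (r : Fin n → ℝ) (j : Fin n) : (Ej r j).Nonempty :=
  ⟨j, by simp [Ej]⟩

/-- `W_j(E_j(r), p)` from the paper. -/
noncomputable def W2 (p : Fin m → Fin n → ℝ) (r : Fin n → ℝ) (j : Fin n) : ℝ :=
  (Ej r j).inf' (Ej_nonempty r j) r + (m : ℝ)⁻¹ * ∑ t ∈ Ej r j, ⨅ i : Fin m, p i t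

/-- Lower bound `LB₂(r)`. -/
noncomputable def LB2 (p : Fin m → Fin n → ℝ) (r : Fin n → ℝ) : ℝ :=
  ⨆ j : Fin n, W2 p r j

/-- `W̃_j(E_j(r), p_w)` from the paper, with `λ_j = ⌈|E_j(r)|/m⌉`. -/
noncomputable def W3 (p : Fin m → Fin n → ℝ) (r : Fin n → ℝ) (j : Fin n) : ℝ :=
  (Ej r j).inf' (Ej_nonempty r j) r +
    (⌈((Ej r j).card : ℝ) / (m : ℝ)⌉ : ℝ) *
      (Ej r j).inf' (Ej_nonempty r j) (fun t => ⨅ i : Fin m, p i t)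

/-- Lower bound `LB₃(r)`. -/
noncomputable def LB3 (p : Fin m → Fin n → ℝ) (r : Fin n → ℝ) : ℝ :=
  ⨆ j : Fin n, W3 p r j

/-- The combined lower bound `LB(r̄) = max {LB₁, LB₂, LB₃}`. -/
noncomputable def LBall (p : Fin m → Fin n → ℝ) (r : Fin n → ℝ) : ℝ :=
  max (LB1 p r) (max (LB2 p r) (LB3 p r))

section AuxLemmas
variable {m n : ℕ}

lemma foldl_step_mono (q r : Fin n → ℝ) (L : List (Fin n)) :
    ∀ {c c' : ℝ}, c ≤ c' →
      L.foldl (fun c j => q j + max c (r j)) c ≤ L.foldl (fun c j => q j + max c (r j)) c' := by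
  induction L with
  | nil => intro c c' h; simpa using h
  | cons a L ih =>
      intro c c' h
      simp only [List.foldl_cons]
      exact ih (by gcongr)

lemma foldl_step_ge_sum (q q' r : Fin n → ℝ) (hq' : ∀ t, 0 ≤ q' t) (hle : ∀ t, q' t ≤ q t)
    (L : List (Fin n)) :
    ∀ c : ℝ, c + (L.map q').sum ≤ L.foldl (fun c j => q j + max c (r j)) c := by
  induction L with
  | nil => intro c; simp
  | cons a L ih =>
      intro c
      simp only [List.map_cons, List.sum_cons, List.foldl_cons]
      calc c + (q' a + (L.map q').sum) = (c + q' a) + (L.map q').sum := by ring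
        _ ≤ (q a + max c (r a)) + (L.map q').sum := by
            have h1 := hle a; have h2 := le_max_left c (r a)
            linarith
        _ ≤ _ := ih _

lemma mComp_split (q q' r : Fin n → ℝ) (hq' : ∀ t, 0 ≤ q' t) (hle : ∀ t, q' t ≤ q t)
    (A B : List (Fin n)) (j : Fin n) :
    r j + q j + (B.map q').sum ≤ mComp q r (A ++ j :: B) := by
  have h0 : (0:ℝ) ≤ A.foldl (fun c j => q j + max c (r j)) 0 := by
    have := foldl_step_ge_sum q (fun _ => 0) r (fun _ => le_rfl)
      (fun t => (hq' t).trans (hle t)) A 0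
    simpa using this
  simp only [mComp, List.foldl_append, List.foldl_cons]
  calc r j + q j + (B.map q').sum
      ≤ (q j + max (A.foldl (fun c j => q j + max c (r j)) 0) (r j)) + (B.map q').sum := by
        have := le_max_right (A.foldl (fun c j => q j + max c (r j)) 0) (r j)
        linarith
    _ ≤ _ := by
        have := foldl_step_ge_sum q q' r hq' hle B
          (q j + max (A.foldl (fun c j => q j + max c (r j)) 0) (r j))
        linarith [this]

lemma mComp_nonneg (q r : Fin n → ℝ) (hq : ∀ t, 0 ≤ q t) (L : List (Fin n)) :
    0 ≤ mComp q r L := by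
  have := foldl_step_ge_sum q (fun _ => 0) r (fun _ => le_rfl) hq L 0
  simpa [mComp] using this

lemma mComp_critical (q r : Fin n → ℝ) (hr : ∀ t, 0 ≤ r t) (L : List (Fin n)) (hL : L ≠ []) :
    ∃ A j B, L = A ++ j :: B ∧ mComp q r L ≤ r j + q j + ((B.map q).sum) := by
  induction L using List.reverseRecOn with
  | nil => exact absurd rfl hL
  | append_singleton L a ih =>
      rcases eq_or_ne L [] with rfl | hne
      · refine ⟨[], a, [], by simp, ?_⟩
        simp [mComp, max_eq_right (hr a)]
        linarith
      · obtain ⟨A, j, B, hAB, hle⟩ := ih hne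
        rcases le_total (L.foldl (fun c j => q j + max c (r j)) 0) (r a) with h | h
        · refine ⟨L, a, [], rfl, ?_⟩
          simp only [mComp, List.foldl_append, List.foldl_cons, List.foldl_nil,
            List.map_nil, List.sum_nil]
          rw [max_eq_right h]; linarith
        · refine ⟨A, j, B ++ [a], by simp [hAB], ?_⟩
          simp only [mComp, List.foldl_append, List.foldl_cons, List.foldl_nil,
            List.map_append, List.sum_append, List.map_cons, List.sum_cons,
            List.map_nil, List.sum_nil]
          rw [max_eq_left h]
          simp only [mComp] at hle
          linarith

lemma mComp_lipschitz (q r r' : Fin n → ℝ) (δ : ℝ) (hδ : 0 ≤ δ) (h : ∀ t, r' t ≤ r t + δ)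
    (L : List (Fin n)) :
    mComp q r' L ≤ mComp q r L + δ := by
  suffices H : ∀ c c' : ℝ, c' ≤ c + δ →
      L.foldl (fun c j => q j + max c (r' j)) c' ≤ L.foldl (fun c j => q j + max c (r j)) c + δ by
    exact H 0 0 (by linarith)
  induction L with
  | nil => intro c c' h'; simpa using h'
  | cons a L ih =>
      intro c c' h'
      simp only [List.foldl_cons]
      apply ih
      have : max c' (r' a) ≤ max (c + δ) (r a + δ) := max_le_max h' (h a)
      have h2 : max (c + δ) (r a + δ) = max c (r a) + δ := (max_add_add_right c (r a) δ).symm ▸ rfl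
      linarith [this, h2.le]

end AuxLemmas

section Aux2
variable {m n : ℕ}

lemma list_map_sum_count {M : Type*} [AddCommMonoid M] (f : Fin n → M) (L : List (Fin n)) :
    (L.map f).sum = ∑ t : Fin n, (L.count t) • f t := by
  induction L with
  | nil => simp
  | cons a L ih =>
      simp only [List.map_cons, List.sum_cons, ih, List.count_cons, beq_iff_eq]
      have h1 : ∀ t : Fin n, ((L.count t + if a = t then 1 else 0)) • f t
          = (L.count t) • f t + (if a = t then f t else 0) := by
        intro t; split <;> simp [add_smul]
      rw [Finset.sum_congr rfl (fun t _ => h1 t), Finset.sum_add_distrib,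
        Finset.sum_ite_eq Finset.univ a f, if_pos (Finset.mem_univ a)]
      abel

lemma exists_first_mem (P : Fin n → Prop) [DecidablePred P] :
    ∀ (L : List (Fin n)), (∃ t ∈ L, P t) →
      ∃ A j B, L = A ++ j :: B ∧ P j ∧ ∀ t ∈ A, ¬ P t := by
  intro L
  induction L with
  | nil => rintro ⟨t, ht, -⟩; simp at ht
  | cons a L ih =>
      intro h
      by_cases ha : P a
      · exact ⟨[], a, L, rfl, ha, by simp⟩
      · obtain ⟨t, ht, hPt⟩ := h
        have ht' : t ∈ L := by
          rcases List.mem_cons.mp ht with rfl | h'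
          · exact absurd hPt ha
          · exact h'
        obtain ⟨A, j, B, hAB, hPj, hA⟩ := ih ⟨t, ht', hPt⟩
        refine ⟨a :: A, j, B, by simp [hAB], hPj, ?_⟩
        intro s hs
        rcases List.mem_cons.mp hs with rfl | h'
        · exact ha
        · exact hA s h'

lemma sched_nonempty (hm : 0 < m) : Nonempty (Schedule m n) := by
  refine ⟨⟨fun i => if i = ⟨0, hm⟩ then List.finRange n else [], ?_⟩⟩
  intro j
  rw [Finset.sum_eq_single (⟨0, hm⟩ : Fin m)]
  · simp [List.count_eq_one_of_mem (List.nodup_finRange n) (List.mem_finRange j)]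
  · intro b _ hb; simp [hb]
  · intro h; exact absurd (Finset.mem_univ _) h

lemma exists_loc (x : Schedule m n) (j : Fin n) :
    ∃ i A B, x.seq i = A ++ j :: B := by
  have h := x.valid j
  have hx : ∃ i, (x.seq i).count j ≠ 0 := by
    by_contra hc; push_neg at hc
    simp [hc] at h
  obtain ⟨i, hi⟩ := hx
  have hmem : j ∈ x.seq i := List.count_pos_iff.mp (Nat.pos_of_ne_zero hi)
  obtain ⟨A, B, hAB⟩ := List.append_of_mem hmem
  exact ⟨i, A, B, hAB⟩

lemma mComp_le_Cmax (p : Fin m → Fin n → ℝ) (x : Schedule m n) (r : Fin n → ℝ) (i : Fin m) :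
    mComp (p i) r (x.seq i) ≤ Cmax p x r := by
  unfold Cmax
  exact le_ciSup (f := fun i => mComp (p i) r (x.seq i))
    (Set.Finite.bddAbove (Set.finite_range _)) i

lemma Cmax_le_of (hm : 0 < m) {p : Fin m → Fin n → ℝ} {x : Schedule m n} {r : Fin n → ℝ} {c : ℝ}
    (h : ∀ i, mComp (p i) r (x.seq i) ≤ c) : Cmax p x r ≤ c := by
  haveI : Nonempty (Fin m) := ⟨⟨0, hm⟩⟩
  exact ciSup_le h

lemma Cmax_nonneg (hm : 0 < m) {p : Fin m → Fin n → ℝ} (hp : ∀ i j, 0 < p i j)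
    (x : Schedule m n) (r : Fin n → ℝ) : 0 ≤ Cmax p x r :=
  le_trans (mComp_nonneg _ r (fun t => (hp ⟨0, hm⟩ t).le) _) (mComp_le_Cmax p x r ⟨0, hm⟩)

lemma Cstar_le (hm : 0 < m) {p : Fin m → Fin n → ℝ} (hp : ∀ i j, 0 < p i j)
    (r : Fin n → ℝ) (y : Schedule m n) : Cstar p r ≤ Cmax p y r :=
  ciInf_le ⟨0, by rintro _ ⟨z, rfl⟩; exact Cmax_nonneg hm hp z r⟩ y

lemma le_Cstar (hm : 0 < m) {p : Fin m → Fin n → ℝ} {r : Fin n → ℝ} {c : ℝ}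
    (h : ∀ y : Schedule m n, c ≤ Cmax p y r) : c ≤ Cstar p r := by
  haveI := sched_nonempty (n := n) hm
  exact le_ciInf h

lemma exists_Cmax_eq (hm : 0 < m) (p : Fin m → Fin n → ℝ) (x : Schedule m n) (r : Fin n → ℝ) :
    ∃ i, Cmax p x r = mComp (p i) r (x.seq i) := by
  haveI : Nonempty (Fin m) := ⟨⟨0, hm⟩⟩
  obtain ⟨i, hi⟩ := Finite.exists_max (fun i => mComp (p i) r (x.seq i))
  refine ⟨i, le_antisymm (ciSup_le hi) ?_⟩
  unfold Cmax
  exact le_ciSup (f := fun i => mComp (p i) r (x.seq i))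
    (Set.Finite.bddAbove (Set.finite_range _)) i

lemma iInf_p_le {p : Fin m → Fin n → ℝ} (t : Fin n) (i : Fin m) :
    (⨅ i : Fin m, p i t) ≤ p i t :=
  ciInf_le (Set.Finite.bddBelow (Set.finite_range _)) i

lemma iInf_p_pos (hm : 0 < m) {p : Fin m → Fin n → ℝ} (hp : ∀ i j, 0 < p i j) (t : Fin n) :
    0 < ⨅ i : Fin m, p i t := by
  haveI : Nonempty (Fin m) := ⟨⟨0, hm⟩⟩
  obtain ⟨i0, hi0⟩ := Finite.exists_min (fun i => p i t)
  have h : (⨅ i : Fin m, p i t) = p i0 t :=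
    le_antisymm (ciInf_le (Set.Finite.bddBelow (Set.finite_range _)) i0) (le_ciInf hi0)
  rw [h]; exact hp i0 t

end Aux2

section Aux3
variable {m n : ℕ}

lemma sched_sum_eq (x : Schedule m n) (f : Fin n → ℝ) :
    ∑ i : Fin m, ((x.seq i).map f).sum = ∑ t : Fin n, f t := by
  simp only [list_map_sum_count]
  rw [Finset.sum_comm]
  refine Finset.sum_congr rfl (fun t _ => ?_)
  rw [← Finset.sum_smul, x.valid t, one_smul]

lemma LB1_le_Cmax (hm : 0 < m) (hn : 1 ≤ n) {p : Fin m → Fin n → ℝ} (hp : ∀ i j, 0 < p i j)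
    (r : Fin n → ℝ) (y : Schedule m n) : LB1 p r ≤ Cmax p y r := by
  haveI : Nonempty (Fin n) := ⟨⟨0, hn⟩⟩
  refine ciSup_le (fun t => ?_)
  obtain ⟨i, A, B, hAB⟩ := exists_loc y t
  have h1 := mComp_split (p i) (fun _ => 0) r (fun _ => le_rfl) (fun s => (hp i s).le) A B t
  rw [← hAB] at h1
  have h2 := mComp_le_Cmax p y r i
  have h3 := iInf_p_le (p := p) t i
  simp only [List.map_const', List.sum_replicate, smul_zero, add_zero] at h1
  linarith

lemma list_sum_if_zero {E : Finset (Fin n)} (g : Fin n → ℝ) {L : List (Fin n)}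
    (h : ∀ t ∈ L, t ∉ E) : (L.map (fun t => if t ∈ E then g t else 0)).sum = 0 := by
  apply List.sum_eq_zero
  intro z hz
  obtain ⟨t, ht, rfl⟩ := List.mem_map.mp hz
  simp [h t ht]

lemma W2_le_Cmax (hm : 0 < m) {p : Fin m → Fin n → ℝ} (hp : ∀ i j, 0 < p i j)
    (r : Fin n → ℝ) (j : Fin n) (y : Schedule m n) :
    W2 p r j ≤ Cmax p y r := by
  classical
  set E := Ej r j with hE
  set S : ℝ := ∑ t ∈ E, ⨅ i : Fin m, p i t with hS
  set f : Fin n → ℝ := fun t => if t ∈ E then ⨅ i : Fin m, p i t else 0 with hf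
  have hf0 : ∀ t, 0 ≤ f t := by
    intro t; rw [hf]; dsimp only; split
    · exact (iInf_p_pos hm hp t).le
    · exact le_rfl
  have hfle : ∀ i t, f t ≤ p i t := by
    intro i t; rw [hf]; dsimp only; split
    · exact iInf_p_le t i
    · exact (hp i t).le
  have htot : ∑ i : Fin m, ((y.seq i).map f).sum = S := by
    rw [sched_sum_eq, hS, hf]
    rw [Finset.sum_ite_mem, Finset.univ_inter]
  have hSpos : 0 < S := Finset.sum_pos (fun t _ => iInf_p_pos hm hp t) (Ej_nonempty r j)
  have hmpos : (0:ℝ) < m := by exact_mod_cast hm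
  have hpig : ∃ i : Fin m, (m:ℝ)⁻¹ * S ≤ ((y.seq i).map f).sum := by
    by_contra hc; push_neg at hc
    have hlt : ∑ i : Fin m, ((y.seq i).map f).sum < ∑ _i : Fin m, (m:ℝ)⁻¹ * S :=
      Finset.sum_lt_sum_of_nonempty ⟨⟨0, hm⟩, Finset.mem_univ _⟩ (fun i _ => hc i)
    rw [htot, Finset.sum_const, Finset.card_univ, Fintype.card_fin, nsmul_eq_mul,
      ← mul_assoc, mul_inv_cancel₀ (ne_of_gt hmpos), one_mul] at hlt
    exact lt_irrefl _ hlt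
  obtain ⟨i, hi⟩ := hpig
  have hposS : 0 < (m:ℝ)⁻¹ * S := by positivity
  have hex : ∃ t ∈ y.seq i, t ∈ E := by
    by_contra hc; push_neg at hc
    rw [list_sum_if_zero _ hc] at hi
    linarith
  obtain ⟨A, j0, B, hAB, hj0E, hA⟩ := exists_first_mem (· ∈ E) (y.seq i) hex
  have hsplit := mComp_split (p i) f r hf0 (hfle i) A B j0
  rw [← hAB] at hsplit
  have hsum : ((y.seq i).map f).sum = f j0 + (B.map f).sum := by
    rw [hAB]; simp only [List.map_append, List.sum_append, List.map_cons, List.sum_cons]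
    rw [list_sum_if_zero _ hA]; ring
  have hfj0 : f j0 = ⨅ i : Fin m, p i j0 := by rw [hf]; simp [hj0E]
  have hle1 : E.inf' (Ej_nonempty r j) r ≤ r j0 := Finset.inf'_le r hj0E
  have h2 := mComp_le_Cmax p y r i
  have h3 := iInf_p_le (p := p) j0 i
  have hW : W2 p r j = E.inf' (Ej_nonempty r j) r + (m:ℝ)⁻¹ * S := rfl
  rw [hW]
  rw [hsum, hfj0] at hi
  linarith

end Aux3

section Aux4
variable {m n : ℕ}

lemma list_sum_ite_mul (E : Finset (Fin n)) (c : ℝ) (L : List (Fin n)) :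
    (L.map (fun t => if t ∈ E then c else 0)).sum
      = (L.map (fun t => if t ∈ E then (1:ℝ) else 0)).sum * c := by
  induction L with
  | nil => simp
  | cons a L ih =>
      simp only [List.map_cons, List.sum_cons, ih]
      split <;> ring

lemma list_sum_ite_cast (E : Finset (Fin n)) (L : List (Fin n)) :
    (L.map (fun t => if t ∈ E then (1:ℝ) else 0)).sum
      = (((L.map (fun t => if t ∈ E then (1:ℕ) else 0)).sum : ℕ) : ℝ) := by
  induction L with
  | nil => simp
  | cons a L ih =>
      simp only [List.map_cons, List.sum_cons, ih]
      split <;> push_cast <;> ring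

lemma W3_le_Cmax (hm : 0 < m) {p : Fin m → Fin n → ℝ} (hp : ∀ i j, 0 < p i j)
    (r : Fin n → ℝ) (j : Fin n) (y : Schedule m n) :
    W3 p r j ≤ Cmax p y r := by
  classical
  set E := Ej r j with hE
  set c0 : ℝ := E.inf' (Ej_nonempty r j) (fun t => ⨅ i : Fin m, p i t) with hc0
  have hc0pos : 0 < c0 := by
    rw [hc0, Finset.lt_inf'_iff]
    exact fun t _ => iInf_p_pos hm hp t
  have hc0le : ∀ t ∈ E, c0 ≤ ⨅ i : Fin m, p i t := fun t ht => Finset.inf'_le _ ht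
  set g : Fin n → ℝ := fun t => if t ∈ E then (1:ℝ) else 0 with hg
  have htot : ∑ i : Fin m, ((y.seq i).map g).sum = (E.card : ℝ) := by
    rw [sched_sum_eq, hg, Finset.sum_ite_mem, Finset.univ_inter]
    simp
  have hmpos : (0:ℝ) < m := by exact_mod_cast hm
  have hcardpos : (0:ℝ) < (E.card : ℝ) := by
    exact_mod_cast Finset.card_pos.mpr (Ej_nonempty r j)
  have hpig : ∃ i : Fin m, (E.card:ℝ) / m ≤ ((y.seq i).map g).sum := by
    by_contra hc; push_neg at hc
    have hlt : ∑ i : Fin m, ((y.seq i).map g).sum < ∑ _i : Fin m, (E.card:ℝ)/m :=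
      Finset.sum_lt_sum_of_nonempty ⟨⟨0, hm⟩, Finset.mem_univ _⟩ (fun i _ => hc i)
    rw [htot, Finset.sum_const, Finset.card_univ, Fintype.card_fin, nsmul_eq_mul,
      mul_div_cancel₀ _ (ne_of_gt hmpos)] at hlt
    exact lt_irrefl _ hlt
  obtain ⟨i, hi⟩ := hpig
  set lam : ℝ := (⌈(E.card : ℝ) / (m:ℝ)⌉ : ℝ) with hlam
  have hgN := list_sum_ite_cast E (y.seq i)
  set N : ℕ := ((y.seq i).map (fun t => if t ∈ E then (1:ℕ) else 0)).sum with hN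
  have hiN : (E.card:ℝ)/m ≤ (N:ℝ) := by
    rw [hg] at hi
    rw [hgN] at hi
    exact hi
  have hlamN : lam ≤ (N:ℝ) := by
    rw [hlam]
    have h1 : ((E.card : ℝ)/m) ≤ ((N:ℤ):ℝ) := by push_cast; exact hiN
    exact_mod_cast Int.ceil_le.mpr h1
  have hex : ∃ t ∈ y.seq i, t ∈ E := by
    by_contra hc; push_neg at hc
    have h0 : ((y.seq i).map g).sum = 0 := by
      rw [hg]; exact list_sum_if_zero (fun _ => (1:ℝ)) hc
    rw [h0] at hi
    have : (0:ℝ) < (E.card:ℝ)/m := div_pos hcardpos hmpos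
    linarith
  obtain ⟨A, j0, B, hAB, hj0E, hA⟩ := exists_first_mem (· ∈ E) (y.seq i) hex
  set q3 : Fin n → ℝ := fun t => if t ∈ E then c0 else 0 with hq3
  have hq30 : ∀ t, 0 ≤ q3 t := by
    intro t; rw [hq3]; dsimp only; split; exacts [hc0pos.le, le_rfl]
  have hq3le : ∀ t, q3 t ≤ p i t := by
    intro t; rw [hq3]; dsimp only; split
    · next ht => exact le_trans (hc0le t ht) (iInf_p_le t i)
    · exact (hp i t).le
  have hsplit := mComp_split (p i) q3 r hq30 hq3le A B j0
  rw [← hAB] at hsplit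
  have hfull : ((y.seq i).map q3).sum = q3 j0 + (B.map q3).sum := by
    rw [hAB]
    simp only [List.map_append, List.sum_append, List.map_cons, List.sum_cons]
    have h0 : (A.map q3).sum = 0 := by rw [hq3]; exact list_sum_if_zero (fun _ => c0) hA
    rw [h0]; ring
  have hfull2 : ((y.seq i).map q3).sum = (N:ℝ) * c0 := by
    rw [hq3, list_sum_ite_mul, ← hg, hgN]
  have hmul : lam * c0 ≤ (N:ℝ) * c0 := mul_le_mul_of_nonneg_right hlamN hc0pos.le
  have hle1 : E.inf' (Ej_nonempty r j) r ≤ r j0 := Finset.inf'_le r hj0E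
  have h2 := mComp_le_Cmax p y r i
  have hq3j0 := hq3le j0
  have hW : W3 p r j = E.inf' (Ej_nonempty r j) r + lam * c0 := rfl
  rw [hW]
  linarith [hfull.symm.trans hfull2]

lemma LBall_le_Cstar (hm : 0 < m) (hn : 1 ≤ n) {p : Fin m → Fin n → ℝ}
    (hp : ∀ i j, 0 < p i j) (r : Fin n → ℝ) : LBall p r ≤ Cstar p r := by
  haveI : Nonempty (Fin n) := ⟨⟨0, hn⟩⟩
  apply le_Cstar hm
  intro y
  refine max_le (LB1_le_Cmax hm hn hp r y) (max_le ?_ ?_)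
  · exact ciSup_le fun j => W2_le_Cmax hm hp r j y
  · exact ciSup_le fun j => W3_le_Cmax hm hp r j y

end Aux4

/-- the relaxed worst-case regret
`Z̃(x) = max_j ( C_max(x, r̄^j) − LB(r̄^j) )` dominates the worst-case
regret `Z(x)`, where `LB = max {LB₁, LB₂, LB₃}`. -/
theorem relaxed_regret_dominates {m n : ℕ} (hm : 0 < m) (hn : 1 ≤ n)
    (p : Fin m → Fin n → ℝ) (hp : ∀ i j, 0 < p i j)
    (rlo rhi : Fin n → ℝ) (hlo : ∀ j, 0 ≤ rlo j) (hlt : ∀ j, rlo j < rhi j)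
    (x : Schedule m n) :
    Zreg p x rlo rhi ≤
      ⨆ j : Fin n, (Cmax p x (extSc rlo rhi j) - LBall p (extSc rlo rhi j)) := by
  classical
  haveI : Nonempty (Fin m) := ⟨⟨0, hm⟩⟩
  haveI : Nonempty (Fin n) := ⟨⟨0, hn⟩⟩
  haveI := sched_nonempty (n := n) hm
  set G : Fin n → ℝ := fun j => Cmax p x (extSc rlo rhi j) - LBall p (extSc rlo rhi j) with hG
  have hGbdd : BddAbove (Set.range G) := Set.Finite.bddAbove (Set.finite_range G)
  have key : ∀ r ∈ box rlo rhi, regret p x r ≤ ⨆ j, G j := by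
    intro r hbox
    have hr0 : ∀ t, 0 ≤ r t := fun t => (hlo t).trans (hbox t).1
    obtain ⟨i, hieq⟩ := exists_Cmax_eq hm p x r
    have hCpos : 0 < Cmax p x r := by
      obtain ⟨i', A, B, hAB⟩ := exists_loc x ⟨0, hn⟩
      have h1 := mComp_split (p i') (fun _ => 0) r (fun _ => le_rfl)
        (fun s => (hp i' s).le) A B ⟨0, hn⟩
      rw [← hAB] at h1
      simp only [List.map_const', List.sum_replicate, smul_zero, add_zero] at h1
      have h2 := mComp_le_Cmax p x r i'
      have h3 := hr0 ⟨0, hn⟩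
      have h4 := hp i' ⟨0, hn⟩
      linarith
    have hne : x.seq i ≠ [] := by
      intro h
      rw [hieq, h] at hCpos
      simp [mComp] at hCpos
    obtain ⟨A, j, B, hAB, hcrit⟩ := mComp_critical (p i) r hr0 (x.seq i) hne
    rw [← hieq] at hcrit
    set r' := extSc rlo rhi j with hr'def
    set δ := rhi j - r j with hδdef
    have hδ : 0 ≤ δ := by have := (hbox j).2; rw [hδdef]; linarith
    have hr'j : r' j = rhi j := by simp [hr'def, extSc]
    have hsplit := mComp_split (p i) (p i) r' (fun s => (hp i s).le) (fun s => le_rfl) A B j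
    rw [← hAB, hr'j] at hsplit
    have hup := mComp_le_Cmax p x r' i
    have h1 : Cmax p x r + δ ≤ Cmax p x r' := by linarith
    have hr'le : ∀ t, r' t ≤ r t + δ := by
      intro t
      by_cases h : t = j
      · subst h; rw [hr'j, hδdef]; linarith
      · have ht : r' t = rlo t := by simp [hr'def, extSc, Function.update_of_ne h]
        rw [ht]; have := (hbox t).1; linarith
    have h2 : Cstar p r' ≤ Cstar p r + δ := by
      have h3 : Cstar p r' - δ ≤ Cstar p r := by
        apply le_Cstar hm
        intro y
        have h4 : Cmax p y r' ≤ Cmax p y r + δ := by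
          apply Cmax_le_of hm
          intro i'
          have h5 := mComp_lipschitz (p i') r r' δ hδ hr'le (y.seq i')
          have h6 := mComp_le_Cmax p y r i'
          linarith
        have h5 := Cstar_le hm hp r' y
        linarith
      linarith
    have h3 := LBall_le_Cstar hm hn hp r'
    have h4 : G j ≤ ⨆ j', G j' := le_ciSup hGbdd j
    have hGj : G j = Cmax p x r' - LBall p r' := rfl
    rw [hGj] at h4
    have hreg : regret p x r = Cmax p x r - Cstar p r := rfl
    rw [hreg]
    linarith
  have hnonneg : 0 ≤ ⨆ j, G j := by
    have h1 := LBall_le_Cstar hm hn hp (extSc rlo rhi (⟨0, hn⟩ : Fin n))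
    have h2 := Cstar_le hm hp (extSc rlo rhi (⟨0, hn⟩ : Fin n)) x
    have h3 : G ⟨0, hn⟩ ≤ ⨆ j, G j := le_ciSup hGbdd _
    have h4 : 0 ≤ G ⟨0, hn⟩ := by rw [hG]; dsimp only; linarith
    linarith
  unfold Zreg
  apply Real.sSup_le _ hnonneg
  rintro z ⟨r, hbr, rfl⟩
  exact key r hbr
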